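/- Let F ⊆ ℝⁿ be non-empty and a > 0. Set O := {x ∈ ℝⁿ : 0 < d(x,F) ≤ a·m(x)} and O' := {x ∈ ℝⁿ : 0 < d(x,F) < 2a·m(x)}. Then for all x ∈ O, d(x,F) ≤ 3·max{1,a}·d(x, ℝⁿ∖O'). -/

import Mathlib

open MeasureTheory Metric Set
open scoped ENNReal NNReal BigOperators

noncomputable section

/-- The gaussian measure `dγ(x) = (2π)^{-n/2} exp(-|x|²/2) dx` on `ℝⁿ`. -/
def gaussMeasure (n : ℕ) : Measure (EuclideanSpace ℝ (Fin n)) :=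
  volume.withDensity fun x =>
    ENNReal.ofReal ((2 * Real.pi) ^ (-(n : ℝ) / 2) * Real.exp (-‖x‖ ^ 2 / 2))

/-- `m(x) = min {1, 1/‖x‖}`. -/
def mfun {n : ℕ} (x : EuclideanSpace ℝ (Fin n)) : ℝ :=
  if ‖x‖ ≤ 1 then 1 else ‖x‖⁻¹

/-- Ornstein–Uhlenbeck (Mehler) semigroup `e^{-tL} u (x)`. -/
def mehler (n : ℕ) (u : EuclideanSpace ℝ (Fin n) → ℝ) (t : ℝ)
    (x : EuclideanSpace ℝ (Fin n)) : ℝ :=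
  ∫ y, u (Real.exp (-t) • x + Real.sqrt (1 - Real.exp (-2 * t)) • y) ∂gaussMeasure n

/-- The gaussian conical square function `S_a u (x)`. -/
def Sfun (n : ℕ) (a : ℝ) (u : EuclideanSpace ℝ (Fin n) → ℝ)
    (x : EuclideanSpace ℝ (Fin n)) : ℝ≥0∞ :=
  (∫⁻ t in Set.Ioo (0 : ℝ) (a * mfun x),
      (∫⁻ y in ball x t,
        (gaussMeasure n (ball y t))⁻¹ *
          ENNReal.ofReal ((t * ‖fderiv ℝ (mehler n u (t ^ 2)) y‖) ^ 2) ∂gaussMeasure n) /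
        ENNReal.ofReal t) ^ (1 / 2 : ℝ)

/-- The gaussian non-tangential maximal function `T*_{(A,a)} u (x)`. -/
def Tstar (n : ℕ) (A a : ℝ) (u : EuclideanSpace ℝ (Fin n) → ℝ)
    (x : EuclideanSpace ℝ (Fin n)) : ℝ≥0∞ :=
  ⨆ (y : EuclideanSpace ℝ (Fin n)) (t : ℝ) (_ : dist y x < A * t) (_ : 0 < t)
      (_ : t < a * mfun x),
    ((gaussMeasure n (ball y (A * t)))⁻¹ *
        ∫⁻ z in ball y (A * t), ENNReal.ofReal ((mehler n u (t ^ 2) z) ^ 2) ∂gaussMeasure n) ^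
      (1 / 2 : ℝ)

/-- The admissible (gaussian) Hardy–Littlewood maximal function `M*_a f (x)`. -/
def Mstar (n : ℕ) (a : ℝ) (f : EuclideanSpace ℝ (Fin n) → ℝ)
    (x : EuclideanSpace ℝ (Fin n)) : ℝ≥0∞ :=
  ⨆ (r : ℝ) (_ : 0 < r) (_ : r ≤ a * mfun x),
    (gaussMeasure n (ball x r))⁻¹ *
      ∫⁻ y in ball x r, ENNReal.ofReal |f y| ∂gaussMeasure n

/-- The admissible cone `Γ^{(A,a)}_x(γ)`. -/
def cone (n : ℕ) (A a : ℝ) (x : EuclideanSpace ℝ (Fin n)) :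
    Set (EuclideanSpace ℝ (Fin n) × ℝ) :=
  {p | dist p.1 x < A * p.2 ∧ 0 < p.2 ∧ p.2 < a * mfun x}

/-- The modified admissible cone `Γ̃^{(A,a)}_x(γ)`. -/
def coneT (n : ℕ) (A a : ℝ) (x : EuclideanSpace ℝ (Fin n)) :
    Set (EuclideanSpace ℝ (Fin n) × ℝ) :=
  {p | dist p.1 x < A * p.2 ∧ 0 < p.2 ∧ p.2 < a * mfun p.1}

/-- The dyadic cube `2^{-k}(v + [0,1)ⁿ)` of scale `k`. -/
def dyadicCube (n k : ℕ) (v : Fin n → ℤ) : Set (EuclideanSpace ℝ (Fin n)) :=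
  {x | ∀ i, x i ∈ Set.Ico ((2 : ℝ) ^ (-(k : ℤ)) * v i) ((2 : ℝ) ^ (-(k : ℤ)) * (v i + 1))}

/-- The centre of the dyadic cube `2^{-k}(v + [0,1)ⁿ)`. -/
def cubeCenter (n k : ℕ) (v : Fin n → ℤ) : EuclideanSpace ℝ (Fin n) :=
  WithLp.toLp 2 (fun i => (2 : ℝ) ^ (-(k : ℤ)) * (v i + 1 / 2))

/-- The layers `L_0 = [-1,1)ⁿ`, `L_l = [-2^l,2^l)ⁿ \ [-2^{l-1},2^{l-1})ⁿ`. -/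
def layer (n : ℕ) : ℕ → Set (EuclideanSpace ℝ (Fin n))
  | 0 => {x | ∀ i, x i ∈ Set.Ico (-1 : ℝ) 1}
  | (l + 1) =>
      {x | ∀ i, x i ∈ Set.Ico (-(2 : ℝ) ^ (l + 1)) ((2 : ℝ) ^ (l + 1))} \
        {x | ∀ i, x i ∈ Set.Ico (-(2 : ℝ) ^ l) ((2 : ℝ) ^ l)}

/-- The cube `α ∘ Q` with the same centre as `Q = 2^{-k}(v + [0,1)ⁿ)` and `α` times
its side-length. -/
def scaledCube (n k : ℕ) (v : Fin n → ℤ) (α : ℝ) : Set (EuclideanSpace ℝ (Fin n)) :=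
  {x | ∀ i, x i ∈ Set.Ico (cubeCenter n k v i - α * (2 : ℝ) ^ (-(k : ℤ)) / 2)
      (cubeCenter n k v i + α * (2 : ℝ) ^ (-(k : ℤ)) / 2)}

/-- The Ornstein–Uhlenbeck operator `Lf(x) = -Δf(x) + x·∇f(x)`. -/
def OU (n : ℕ) (f : EuclideanSpace ℝ (Fin n) → ℂ) (x : EuclideanSpace ℝ (Fin n)) : ℂ :=
  -(∑ i : Fin n, iteratedFDeriv ℝ 2 f x ![EuclideanSpace.single i 1, EuclideanSpace.single i 1]) +
    fderiv ℝ f x x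


lemma mfun_pos {n : ℕ} (x : EuclideanSpace ℝ (Fin n)) : 0 < mfun x := by
  unfold mfun
  split_ifs with h
  · norm_num
  · push_neg at h
    exact inv_pos.2 (by linarith)

lemma mfun_le_one {n : ℕ} (x : EuclideanSpace ℝ (Fin n)) : mfun x ≤ 1 := by
  unfold mfun
  split_ifs with h
  · exact le_refl 1
  · push_neg at h
    rw [inv_le_one_iff₀]
    right; linarith

lemma mfun_lip {n : ℕ} (x y : EuclideanSpace ℝ (Fin n)) :
    mfun x ≤ mfun y + dist x y := by
  have hd : |‖x‖ - ‖y‖| ≤ dist x y := by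
    rw [dist_eq_norm]; exact abs_norm_sub_norm_le x y
  rw [abs_sub_le_iff] at hd
  obtain ⟨hd1, hd2⟩ := hd
  have h0 : (0:ℝ) ≤ dist x y := dist_nonneg
  unfold mfun
  split_ifs with h1 h2 h2
  · linarith
  · -- ‖x‖ ≤ 1 < ‖y‖ : need 1 ≤ ‖y‖⁻¹ + dist
    push_neg at h2
    have hy : (0:ℝ) < ‖y‖ := by linarith
    rw [inv_eq_one_div]
    rw [div_add' _ _ _ (ne_of_gt hy), le_div_iff₀ hy]
    nlinarith [sq_nonneg (‖y‖ - 1)]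
  · -- ‖y‖ ≤ 1 < ‖x‖ : ‖x‖⁻¹ ≤ 1 ≤ 1 + dist
    push_neg at h1
    have hx : (0:ℝ) < ‖x‖ := by linarith
    have : ‖x‖⁻¹ ≤ 1 := by rw [inv_le_one_iff₀]; right; linarith
    linarith
  · push_neg at h1 h2
    have hx : (0:ℝ) < ‖x‖ := by linarith
    have hy : (0:ℝ) < ‖y‖ := by linarith
    rw [inv_eq_one_div, inv_eq_one_div, div_add' _ _ _ (ne_of_gt hy),
      div_le_div_iff₀ hx hy]
    nlinarith [mul_nonneg h0 (by nlinarith : (0:ℝ) ≤ ‖x‖ * ‖y‖ - 1)]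

/-- for `x ∈ O`, `d(x,F) ≤ 3·max{1,a}·d(x, ∁O')`. -/
theorem dist_le_dist_complement (n : ℕ) (a : ℝ) (ha : 0 < a)
    (F : Set (EuclideanSpace ℝ (Fin n))) (hF : F.Nonempty)
    (x : EuclideanSpace ℝ (Fin n))
    (hx : 0 < infDist x F ∧ infDist x F ≤ a * mfun x) :
    infDist x F ≤ 3 * max 1 a *
      infDist x {y : EuclideanSpace ℝ (Fin n) |
        0 < infDist y F ∧ infDist y F < 2 * a * mfun y}ᶜ := by
  obtain ⟨hx1, hx2⟩ := hx
  set S : Set (EuclideanSpace ℝ (Fin n)) :=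
    {y | 0 < infDist y F ∧ infDist y F < 2 * a * mfun y} with hS
  set d := infDist x F with hd
  set M := max (1:ℝ) a with hM
  have hM1 : (1:ℝ) ≤ M := le_max_left _ _
  have hMa : a ≤ M := le_max_right _ _
  have hM0 : (0:ℝ) < M := by linarith
  set r := d / (3 * M) with hr
  have hr0 : 0 < r := div_pos hx1 (by linarith)
  have hrd : 3 * M * r = d := by rw [hr]; field_simp [hM0.ne']
  have hmx : 0 < mfun x := mfun_pos x
  have hr3 : r ≤ mfun x / 3 := by
    rw [hr, div_le_div_iff₀ (by linarith) (by norm_num)]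
    calc d * 3 ≤ a * mfun x * 3 := by linarith
    _ ≤ mfun x * (3 * M) := by nlinarith
  have hrd3 : r ≤ d / 3 := by
    rw [hr, div_le_div_iff₀ (by linarith) (by norm_num)]
    nlinarith
  -- the ball of radius r around x is contained in S
  have hball : ∀ y : EuclideanSpace ℝ (Fin n), dist x y < r → y ∈ S := by
    intro y hy
    have h1 : d ≤ infDist y F + dist x y := infDist_le_infDist_add_dist
    have h2 : infDist y F ≤ d + dist x y := by
      have := infDist_le_infDist_add_dist (x := y) (y := x) (s := F)
      rwa [dist_comm] at this
    have h3 : mfun x ≤ mfun y + dist x y := mfun_lip x y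
    have h4 : 0 ≤ dist x y := dist_nonneg
    constructor
    · -- 0 < infDist y F
      have : r ≤ d / 3 := hrd3
      linarith
    · -- infDist y F < 2 a mfun y
      have hmy : mfun y ≥ (2/3) * mfun x := by linarith
      have : infDist y F < d + r := by linarith
      have h5 : d + r ≤ (4/3) * d := by linarith
      have h6 : (4/3) * d ≤ (4/3) * (a * mfun x) := by linarith
      have h7 : (4/3) * (a * mfun x) ≤ 2 * a * mfun y := by nlinarith
      linarith
  -- Sᶜ is nonempty
  obtain ⟨z, hz⟩ := hF
  have hzc : z ∈ Sᶜ := by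
    intro hzS
    have : infDist z F = 0 := infDist_zero_of_mem hz
    rw [hS] at hzS
    exact absurd hzS.1 (by rw [this]; exact lt_irrefl 0)
  have hle : r ≤ infDist x Sᶜ := by
    by_contra hcon
    push_neg at hcon
    obtain ⟨y, hyS, hyd⟩ := (infDist_lt_iff ⟨z, hzc⟩).1 hcon
    exact hyS (hball y hyd)
  calc d = 3 * M * r := hrd.symm
  _ ≤ 3 * M * infDist x Sᶜ := by nlinarith

end
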